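/- For every m ≥ 0, define strings u_k over Σ_m = {b, a_1, …, a_m} by u_0 = ε and u_k = u_{k-1} b a_k u_{k-1}. Then |u_m b| = 2^{m+1} − 1, every odd-length prefix of u_m b ends with the letter b, and every even-length prefix of u_m b is accepted by the NFA A_m whose states are {0,1,…,m} (all initial, 0 accepting) with b-self-loops on states 1,…,m, a_j-self-loops on states i > j, and a_i-transitions from state i to every state j < i. Consequently the prefixes of u_m b form an alternating tower of height 2^{m+1} between L(A_m) and Σ_m* b. -/

import Mathlib

/-- A finite alternating subsequence tower of height `r` between `K` and `L`. -/
def SubTower {α : Type*} (K L : Set (List α)) (r : ℕ) (w : ℕ → List α) : Prop :=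
  (0 < r → w 0 ∈ K ∪ L) ∧
    ∀ i, i + 1 < r →
      (w i).Sublist (w (i + 1)) ∧
        (w i ∈ K → w (i + 1) ∈ L) ∧ (w i ∈ L → w (i + 1) ∈ K)

/-- The alphabet `Σ_m = {b, a_1, …, a_m}` is encoded in `ℕ`: the letter `b` is `0`
and the letter `a_i` is `i` (for `1 ≤ i ≤ m`).  The NFA `A_m` has states
`{0,1,…,m}` (all initial, `0` accepting), `b`-self-loops on states `1,…,m`,
`a_j`-self-loops on states `i > j`, and `a_i`-transitions from `i` to all `j < i`. -/
def expNFA (m : ℕ) : NFA ℕ (Fin (m + 1)) where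
  step i c :=
    {j | (c = 0 ∧ 1 ≤ (i : ℕ) ∧ j = i) ∨
      (1 ≤ c ∧ c < (i : ℕ) ∧ j = i) ∨
      (c = (i : ℕ) ∧ 1 ≤ (i : ℕ) ∧ (j : ℕ) < (i : ℕ))}
  start := Set.univ
  accept := {i | (i : ℕ) = 0}

/-- The strings `u_k`: `u_0 = ε` and `u_k = u_{k-1} b a_k u_{k-1}`. -/
def uWord : ℕ → List ℕ
  | 0 => []
  | k + 1 => uWord k ++ 0 :: (k + 1) :: uWord k

/-- The language `Σ_m* b`. -/
def endsWithB (m : ℕ) : Set (List ℕ) :=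
  {w | (∀ c ∈ w, c ≤ m) ∧ ∃ v, w = v ++ [0]}

lemma uWord_length (k : ℕ) : (uWord k).length + 2 = 2 ^ (k + 1) := by
  induction k with
  | zero => simp [uWord]
  | succ k ih =>
    simp only [uWord, List.length_append, List.length_cons] at *
    rw [pow_succ]
    omega

lemma uWord_le (k : ℕ) : ∀ c ∈ uWord k, c ≤ k := by
  induction k with
  | zero => simp [uWord]
  | succ k ih =>
    intro c hc
    simp only [uWord, List.mem_append, List.mem_cons] at hc
    rcases hc with h | h | h | h
    · exact (ih c h).trans (Nat.le_succ k)
    · omega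
    · omega
    · exact (ih c h).trans (Nat.le_succ k)

lemma uWord_parity (k : ℕ) : ∀ (i c : ℕ), (uWord k ++ [0])[i]? = some c →
    (Even i ↔ c = 0) := by
  induction k with
  | zero =>
    intro i c hc
    rcases i with _ | j
    · simp [uWord] at hc; subst hc; simp
    · simp [uWord] at hc
  | succ k ih =>
    intro i c hc
    have hlen : (uWord k ++ [0]).length + 1 = 2 ^ (k + 1) := by
      have := uWord_length k; simp [List.length_append]; omega
    have heq : uWord (k + 1) ++ [0]
        = (uWord k ++ [0]) ++ ((k + 1) :: (uWord k ++ [0])) := by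
      simp [uWord]
    rw [heq] at hc
    set L := (uWord k ++ [0]).length with hL
    have hLodd : ¬ Even L := by
      have hE : Even (L + 1) := by
        rw [hlen]; exact (Nat.even_pow.mpr ⟨even_two, k.succ_ne_zero⟩)
      simpa [Nat.even_add_one] using hE
    rcases lt_trichotomy i L with hi | hi | hi
    · rw [List.getElem?_append_left hi] at hc
      exact ih i c hc
    · subst hi
      rw [List.getElem?_append_right (le_refl _), Nat.sub_self] at hc
      simp only [List.getElem?_cons_zero, Option.some.injEq] at hc
      constructor
      · intro he; exact absurd he hLodd
      · intro h0; omega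
    · rw [List.getElem?_append_right (le_of_lt hi)] at hc
      have h1 : i - L = (i - L - 1) + 1 := by omega
      rw [h1, List.getElem?_cons_succ] at hc
      rw [← ih (i - L - 1) c hc]
      rcases Nat.odd_iff.mp (Nat.odd_iff.mpr (by
        rcases Nat.even_or_odd L with hE | hO
        · exact absurd hE hLodd
        · exact Nat.odd_iff.mp hO)) with hLmod
      constructor
      · intro ⟨t, ht⟩
        rcases Nat.even_or_odd (i - L - 1) with hE | hO
        · exact hE
        · exfalso; rcases hO with ⟨s, hs⟩; omega
      · rintro ⟨s, hs⟩
        rcases Nat.odd_iff.mpr hLmod with ⟨t, ht⟩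
        exact ⟨s + t + 1, by omega⟩

lemma evalFrom_mono {α σ : Type*} (M : NFA α σ) {S T : Set σ} (h : S ⊆ T) :
    ∀ w, M.evalFrom S w ⊆ M.evalFrom T w := by
  intro w
  induction w generalizing S T with
  | nil => simpa [NFA.evalFrom] using h
  | cons c w ih =>
    have hst : M.stepSet S c ⊆ M.stepSet T c := by
      intro x hx
      rw [NFA.mem_stepSet] at hx ⊢
      obtain ⟨t, ht, hx⟩ := hx
      exact ⟨t, h ht, hx⟩
    exact ih hst

lemma evalFrom_append {α σ : Type*} (M : NFA α σ) (S : Set σ) (x y : List α) :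
    M.evalFrom S (x ++ y) = M.evalFrom (M.evalFrom S x) y := by
  simp [NFA.evalFrom, List.foldl_append]

lemma mem_evalFrom_self {α σ : Type*} (M : NFA α σ) {s : σ} {w : List α}
    (h : ∀ c ∈ w, s ∈ M.step s c) : s ∈ M.evalFrom {s} w := by
  induction w with
  | nil => simp [NFA.evalFrom]
  | cons c w ih =>
    have h1 : ({s} : Set σ) ⊆ M.stepSet {s} c := by
      intro x hx
      rw [Set.mem_singleton_iff] at hx
      rw [hx]
      exact NFA.mem_stepSet.mpr ⟨s, rfl, h c (by simp)⟩
    have : M.evalFrom {s} (c :: w) = M.evalFrom (M.stepSet {s} c) w := rfl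
    rw [this]
    exact evalFrom_mono M h1 w (ih (fun c hc => h c (by simp [hc])))

lemma accept_aux (m : ℕ) : ∀ k, k ≤ m → ∀ q, Even q → q ≤ (uWord k).length →
    ∃ s : Fin (m + 1), (s : ℕ) ≤ k ∧
      (⟨0, Nat.succ_pos m⟩ : Fin (m + 1)) ∈ (expNFA m).evalFrom {s} ((uWord k).take q) := by
  intro k
  induction k with
  | zero =>
    intro _ q _ hq
    simp [uWord] at hq
    subst hq
    exact ⟨⟨0, Nat.succ_pos m⟩, by simp, by simp [NFA.evalFrom, uWord]⟩
  | succ k ih =>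
    intro hk q hqe hql
    have hkm : k ≤ m := by omega
    set L := (uWord k).length with hL
    have hLe : Even L := by
      have := uWord_length k
      have hE : Even (2 ^ (k + 1)) := Nat.even_pow.mpr ⟨even_two, k.succ_ne_zero⟩
      rcases hE with ⟨t, ht⟩
      exact ⟨t - 1, by omega⟩
    by_cases hcase : q ≤ L
    · obtain ⟨s, hs, hrun⟩ := ih hkm q hqe hcase
      have : (uWord (k+1)).take q = (uWord k).take q := by
        rw [show uWord (k+1) = uWord k ++ 0 :: (k+1) :: uWord k from rfl,
          List.take_append_of_le_length hcase]
      rw [this]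
      exact ⟨s, by omega, hrun⟩
    · -- q ≥ L + 2
      have hq2 : L + 2 ≤ q := by
        rcases hqe with ⟨t, ht⟩; rcases hLe with ⟨u, hu⟩; omega
      have hq' : q - L - 2 ≤ L := by
        have : (uWord (k+1)).length = L + 2 + L := by
          simp [uWord, List.length_append]; omega
        omega
      have hq'e : Even (q - L - 2) := by
        rcases hqe with ⟨t, ht⟩; rcases hLe with ⟨u, hu⟩
        exact ⟨t - u - 1, by omega⟩
      obtain ⟨s, hs, hrun⟩ := ih hkm (q - L - 2) hq'e hq'
      have hdecomp : (uWord (k+1)).take q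
          = ((uWord k ++ [0]) ++ [k+1]) ++ (uWord k).take (q - L - 2) := by
        rw [show uWord (k+1) = uWord k ++ 0 :: (k+1) :: uWord k from rfl,
          List.take_append,
          List.take_of_length_le (by omega : (uWord k).length ≤ q)]
        have h2 : q - L = (q - L - 2) + 2 := by omega
        rw [← hL, h2]
        simp [List.take_succ_cons]
      set s1 : Fin (m + 1) := ⟨k + 1, by omega⟩ with hs1
      refine ⟨s1, le_refl _, ?_⟩
      rw [hdecomp, evalFrom_append, evalFrom_append]
      have step1 : s1 ∈ (expNFA m).evalFrom {s1} (uWord k ++ [0]) := by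
        apply mem_evalFrom_self
        intro c hc
        have hcle : c ≤ k := by
          rcases List.mem_append.mp hc with h | h
          · exact uWord_le k c h
          · simp at h; omega
        rcases Nat.eq_zero_or_pos c with h0 | h0
        · exact Or.inl ⟨h0, by simp [hs1], rfl⟩
        · exact Or.inr (Or.inl ⟨h0, by simp [hs1]; omega, rfl⟩)
      have step2 : s ∈ (expNFA m).evalFrom ((expNFA m).evalFrom {s1} (uWord k ++ [0])) [k+1] := by
        rw [NFA.evalFrom_singleton]
        exact NFA.mem_stepSet.mpr
          ⟨s1, step1, Or.inr (Or.inr ⟨by simp [hs1], by simp [hs1], by simp [hs1]; omega⟩)⟩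
      exact evalFrom_mono (expNFA m) (Set.singleton_subset_iff.mpr step2) _ hrun

lemma not_accept_endB (m : ℕ) (S : Set (Fin (m+1))) (v : List ℕ) :
    (⟨0, Nat.succ_pos m⟩ : Fin (m + 1)) ∉ (expNFA m).evalFrom S (v ++ [0]) := by
  intro h
  rw [NFA.evalFrom_append, NFA.evalFrom_singleton, NFA.mem_stepSet] at h
  obtain ⟨t, _, ht⟩ := h
  rcases ht with ⟨_, h1, h2⟩ | ⟨h1, _, _⟩ | ⟨h1, h2, _⟩
  · rw [Fin.ext_iff] at h2; simp at h2; omega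
  · omega
  · omega

lemma uWord_mem_le (m : ℕ) : ∀ c ∈ uWord m ++ [0], c ≤ m := by
  intro c hc
  rcases List.mem_append.mp hc with h | h
  · exact uWord_le m c h
  · simp at h; omega

lemma oddPre (m : ℕ) : ∀ p, p <+: uWord m ++ [0] → Odd p.length → ∃ v, p = v ++ [0] := by
  intro p hp hodd
  set w := uWord m ++ [0] with hw
  obtain ⟨t, ht⟩ := hodd
  have hple : p.length ≤ w.length := hp.length_le
  have htlt : t + t < w.length := by omega
  have hpt : p = w.take (t + t) ++ (w[t + t]?).toList := by
    rw [List.prefix_iff_eq_take.mp hp, ht, show 2 * t + 1 = (t + t) + 1 by omega,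
      List.take_succ]
  have hg : w[t + t]? = some w[t + t] := List.getElem?_eq_getElem htlt
  have h0 : w[t + t] = 0 :=
    (uWord_parity m (t + t) _ hg).mp ⟨t, rfl⟩
  exact ⟨w.take (t + t), by rw [hpt, hg, h0]; rfl⟩

lemma uWord_even_len (m : ℕ) : Even (uWord m).length := by
  have := uWord_length m
  have hE : Even (2 ^ (m + 1)) := Nat.even_pow.mpr ⟨even_two, m.succ_ne_zero⟩
  rcases hE with ⟨t, ht⟩
  exact ⟨t - 1, by omega⟩

lemma evenAcc (m : ℕ) : ∀ p, p <+: uWord m ++ [0] → Even p.length →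
    p ∈ (expNFA m).accepts := by
  intro p hp heven
  have hple : p.length ≤ (uWord m).length + 1 := by
    have := hp.length_le; simpa [List.length_append] using this
  have hle : p.length ≤ (uWord m).length := by
    rcases heven with ⟨t, ht⟩
    rcases uWord_even_len m with ⟨u, hu⟩
    omega
  have hpt := List.prefix_iff_eq_take.mp hp
  rw [List.take_append_of_le_length hle] at hpt
  obtain ⟨s, _, hrun⟩ := accept_aux m m le_rfl p.length heven hle
  rw [NFA.mem_accepts]
  refine ⟨⟨0, Nat.succ_pos m⟩, rfl, ?_⟩
  rw [show (expNFA m).start = Set.univ from rfl, hpt]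
  exact evalFrom_mono (expNFA m) (Set.subset_univ _) _ hrun

theorem exp_tower (m : ℕ) :
    (uWord m ++ [0]).length = 2 ^ (m + 1) - 1 ∧
    (∀ p, p <+: uWord m ++ [0] → Odd p.length → ∃ v, p = v ++ [0]) ∧
    (∀ p, p <+: uWord m ++ [0] → Even p.length → p ∈ (expNFA m).accepts) ∧
    SubTower ((expNFA m).accepts : Set (List ℕ)) (endsWithB m) (2 ^ (m + 1))
      (fun i => (uWord m ++ [0]).take i) := by
  have hlen2 := uWord_length m
  set w := uWord m ++ [0] with hw
  have hN : w.length + 1 = 2 ^ (m + 1) := by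
    simp [hw, List.length_append]; omega
  refine ⟨by omega, oddPre m, evenAcc m, ?_, ?_⟩
  · intro _
    left
    refine NFA.mem_accepts.mpr ?_
    exact ⟨⟨0, Nat.succ_pos m⟩, rfl, by simp [NFA.evalFrom, expNFA]⟩
  · intro i hi
    have hi1 : i + 1 ≤ w.length := by omega
    refine ⟨?_, ?_⟩
    · have h1 : (w.take (i+1)).take i = w.take i := by
        rw [List.take_take]; congr 1; omega
      rw [show (fun i => List.take i w) i = List.take i (List.take (i+1) w) from h1.symm]
      exact List.take_sublist i (w.take (i+1))
    rcases Nat.even_or_odd i with hev | hod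
    · have hK1 : w.take (i + 1) ∈ endsWithB m := by
        refine ⟨fun c hc => uWord_mem_le m c ((List.take_sublist _ _).subset hc), ?_⟩
        refine oddPre m _ (List.take_prefix _ _) ?_
        rcases hev with ⟨t, ht⟩
        rw [List.length_take]
        exact ⟨t, by omega⟩
      have hnotL : w.take i ∉ endsWithB m := by
        rintro ⟨-, v, hv⟩
        have hlt : (w.take i).length = i := by rw [List.length_take]; omega
        have hiv : i = v.length + 1 := by
          rw [hv] at hlt; simp [List.length_append] at hlt; omega
        have hwdec : w = v ++ ([0] ++ w.drop i) := by
          conv_lhs => rw [← List.take_append_drop i w]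
          rw [hv, List.append_assoc]
        have hg : w[v.length]? = some 0 := by
          rw [hwdec, List.getElem?_append_right (le_refl _), Nat.sub_self]
          simp
        have := (uWord_parity m v.length 0 hg).mpr rfl
        rcases this with ⟨t, ht⟩
        rcases hev with ⟨u, hu⟩
        omega
      exact ⟨fun _ => hK1, fun hL => absurd hL hnotL⟩
    · have hK2 : w.take (i + 1) ∈ (expNFA m).accepts := by
        refine evenAcc m _ (List.take_prefix _ _) ?_
        rcases hod with ⟨t, ht⟩
        rw [List.length_take]
        exact ⟨t + 1, by omega⟩
      have hnotK : w.take i ∉ (expNFA m).accepts := by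
        intro hacc
        obtain ⟨v, hv⟩ := oddPre m (w.take i) (List.take_prefix _ _) (by
          rcases hod with ⟨t, ht⟩
          rw [List.length_take]
          exact ⟨t, by omega⟩)
        rw [NFA.mem_accepts] at hacc
        obtain ⟨S, hS, hrun⟩ := hacc
        have hS0 : S = ⟨0, Nat.succ_pos m⟩ := Fin.ext hS
        rw [hS0, hv] at hrun
        exact not_accept_endB m _ v hrun
      exact ⟨fun hK => absurd hK hnotK, fun _ => hK2⟩
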